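/- With D_1 = n^e and D_{i+1} the gcd of the e×e minors of the matrix (n·I_e | m_1^T | ... | m_i^T), the hypothesis m_i ∉ (nℤ)^e + Σ_{j<i} m_j ℤ for all i implies D_{i+1} < D_i for all 1 ≤ i ≤ h. -/

import Mathlib

/-- The `e × (e+k)` matrix `(n·I_e | m_1ᵀ | … | m_kᵀ)`. -/
def augMatrixK (e n k : ℕ) (m : ℕ → Fin e → ℕ) :
    Matrix (Fin e) (Fin e ⊕ Fin k) ℤ :=
  fun i j => Sum.elim (fun j' => if i = j' then (n : ℤ) else 0)
    (fun j' : Fin k => (m j' i : ℤ)) j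

/-- The gcd of all `e × e` minors of a matrix with `e` rows. -/
noncomputable def gcdMinors {e : ℕ} {c : Type*} [Fintype c] [DecidableEq c]
    (M : Matrix (Fin e) c ℤ) : ℤ :=
  Finset.gcd (Finset.univ.filter fun g : Fin e → c => Function.Injective g)
    fun g => (M.submatrix id g).det

/-- `D (i+1)` in the paper: the gcd of the `e × e` minors of
`(n·I_e | m_1ᵀ | … | m_iᵀ)`; in particular `D 0 = n^e` here corresponds to `D_1`. -/
noncomputable def Dseq (e n : ℕ) (m : ℕ → Fin e → ℕ) (i : ℕ) : ℤ :=
  gcdMinors (augMatrixK e n i m)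

/-- The lattice `(nℤ)^e + m_0 ℤ + ⋯ + m_{i-1} ℤ` (paper notation `M_i`). -/
def latticeUpTo (e n i : ℕ) (m : ℕ → Fin e → ℕ) : Submodule ℤ (Fin e → ℤ) :=
  Submodule.span ℤ ((Set.range fun j : Fin e => (n : ℤ) • Pi.single j 1) ∪
    (Set.range fun j : Fin i => fun t : Fin e => (m j t : ℤ)))

open Matrix in
theorem gcdMinors_dvd_det_mul {e : ℕ} {c : Type*} [Fintype c] [DecidableEq c]
    (B : Matrix (Fin e) c ℤ) (S : Matrix c (Fin e) ℤ) :
    gcdMinors B ∣ (B * S).det := by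
  have key : (B * S).det = ∑ r : Fin e → c,
      (∏ i, S (r i) i) * (Bᵀ.submatrix r id).det := by
    rw [← Matrix.det_transpose, Matrix.transpose_mul]
    have h0 : (Sᵀ * Bᵀ) = Matrix.of (fun i => ∑ x : c, S x i • (Bᵀ x)) := by
      ext i j
      simp [Matrix.mul_apply, Finset.sum_apply, mul_comm]
    rw [h0]
    have h1 : ∀ M : Matrix (Fin e) (Fin e) ℤ,
        M.det = Matrix.detRowAlternating M := fun _ => rfl
    rw [h1]
    have := (Matrix.detRowAlternating (R := ℤ) (n := Fin e)).toMultilinearMap.map_sum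
      (g := fun i x => S x i • (Bᵀ x))
    simp only [AlternatingMap.coe_multilinearMap] at this
    rw [show (Matrix.of (fun i => ∑ x : c, S x i • (Bᵀ x)) : Matrix (Fin e) (Fin e) ℤ)
        = (fun i => ∑ x : c, S x i • (Bᵀ x)) from rfl, this]
    refine Finset.sum_congr rfl fun r _ => ?_
    have := (Matrix.detRowAlternating (R := ℤ) (n := Fin e)).toMultilinearMap.map_smul_univ
      (fun i => S (r i) i) (fun i => Bᵀ (r i))
    simp only [AlternatingMap.coe_multilinearMap] at this
    rw [this, smul_eq_mul]
    rfl
  rw [key]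
  refine Finset.dvd_sum fun r _ => ?_
  by_cases hr : Function.Injective r
  · have h2 := Finset.gcd_dvd (show r ∈ Finset.univ.filter
        (fun g : Fin e → c => Function.Injective g) by simp [hr])
        (f := fun g => (B.submatrix id g).det)
    rw [← Matrix.det_transpose (B.submatrix id r), Matrix.transpose_submatrix] at h2
    exact h2.mul_left _
  · obtain ⟨i, j, hij, hne⟩ : ∃ i j, r i = r j ∧ i ≠ j := by
      simp only [Function.Injective, not_forall] at hr
      obtain ⟨i, j, h1, h2⟩ := hr; exact ⟨i, j, h1, h2⟩
    have : (Bᵀ.submatrix r id).det = 0 :=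
      Matrix.det_zero_of_row_eq hne (funext fun t => by
        simp [Matrix.submatrix_apply, Matrix.transpose_apply, hij])
    rw [this, mul_zero]
    exact dvd_zero _

theorem gcdMinors_eq_normalize_det {e : ℕ} {c : Type*} [Fintype c] [DecidableEq c]
    (A : Matrix (Fin e) c ℤ) (W : Matrix (Fin e) (Fin e) ℤ)
    (hrange : LinearMap.range A.mulVecLin = LinearMap.range W.mulVecLin)
    (hinj : Function.Injective W.mulVecLin) :
    gcdMinors A = normalize W.det := by
  classical
  have hcol : ∀ j : c, ∃ x : Fin e → ℤ, W.mulVec x = fun i => A i j := by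
    intro j
    have hmem : (fun i => A i j) ∈ LinearMap.range W.mulVecLin := by
      rw [← hrange]
      exact ⟨Pi.single j 1, by ext i; simp [Matrix.mulVecLin_apply]⟩
    obtain ⟨x, hx⟩ := hmem; exact ⟨x, hx⟩
  choose Bc hBc using hcol
  set B : Matrix (Fin e) c ℤ := Matrix.of fun i j => Bc j i with hB
  have hAWB : A = W * B := by
    ext i j
    have := congrFun (hBc j) i
    simpa [Matrix.mulVec, Matrix.mul_apply, dotProduct, hB] using this.symm
  have hBsurj : Function.Surjective B.mulVecLin := by
    intro y
    have hmem : W.mulVecLin y ∈ LinearMap.range A.mulVecLin :=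
      hrange ▸ LinearMap.mem_range_self _ y
    obtain ⟨x, hx⟩ := hmem
    refine ⟨x, hinj ?_⟩
    rw [← hx, hAWB, Matrix.mulVecLin_mul]; rfl
  obtain ⟨g, hg⟩ := LinearMap.exists_rightInverse_of_surjective B.mulVecLin
      (LinearMap.range_eq_top.2 hBsurj)
  set S := LinearMap.toMatrix' g with hS
  have hSg : S.mulVecLin = g := by
    rw [hS, ← Matrix.toLin'_apply', Matrix.toLin'_toMatrix']
  have hBS : B * S = 1 := by
    have hq : (B * S).mulVecLin = (1 : Matrix (Fin e) (Fin e) ℤ).mulVecLin := by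
      rw [Matrix.mulVecLin_mul, hSg, Matrix.mulVecLin_one]
      exact hg
    rw [← Matrix.toLin'_apply', ← Matrix.toLin'_apply'] at hq
    exact Matrix.toLin'.injective hq
  have hunit : IsUnit (gcdMinors B) := by
    have := gcdMinors_dvd_det_mul B S
    rw [hBS, Matrix.det_one] at this
    exact isUnit_of_dvd_one this
  have hBnorm : gcdMinors B = 1 := by
    have h1 : normalize (gcdMinors B) = gcdMinors B := Finset.normalize_gcd
    rw [← h1, normalize_eq_one]
    exact hunit
  have hfac : gcdMinors A = normalize W.det * gcdMinors B := by
    rw [hAWB]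
    unfold gcdMinors
    rw [← Finset.gcd_mul_left]
    refine Finset.gcd_congr rfl fun g hg => ?_
    rw [Matrix.submatrix_mul W B id id g Function.bijective_id,
      Matrix.submatrix_id_id, Matrix.det_mul]
  rw [hfac, hBnorm, mul_one]

theorem exists_factor_matrix {e : ℕ} {c : Type*} [Fintype c] [DecidableEq c]
    (A : Matrix (Fin e) c ℤ) (W : Matrix (Fin e) (Fin e) ℤ)
    (h : LinearMap.range A.mulVecLin ≤ LinearMap.range W.mulVecLin) :
    ∃ B : Matrix (Fin e) c ℤ, A = W * B := by
  have hcol : ∀ j : c, ∃ x : Fin e → ℤ, W.mulVec x = fun i => A i j := by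
    intro j
    have hmem : (fun i => A i j) ∈ LinearMap.range W.mulVecLin :=
      h ⟨Pi.single j 1, by ext i; simp [Matrix.mulVecLin_apply]⟩
    obtain ⟨x, hx⟩ := hmem; exact ⟨x, hx⟩
  choose Bc hBc using hcol
  refine ⟨Matrix.of fun i j => Bc j i, ?_⟩
  ext i j
  have := congrFun (hBc j) i
  simpa [Matrix.mulVec, Matrix.mul_apply, dotProduct] using this.symm

theorem exists_basis_matrix {e n : ℕ} (hn : n ≠ 0) (L : Submodule ℤ (Fin e → ℤ))
    (hL : ∀ j : Fin e, ((n : ℤ) • Pi.single j 1) ∈ L) :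
    ∃ W : Matrix (Fin e) (Fin e) ℤ,
      LinearMap.range W.mulVecLin = L ∧ Function.Injective W.mulVecLin := by
  obtain ⟨r, b⟩ := Submodule.basisOfPid (Pi.basisFun ℤ (Fin e)) L
  have hre : r = e := by
    have h1 : r ≤ e := by
      have hind : LinearIndependent ℤ (fun i : Fin r => ((b i : Fin e → ℤ))) :=
        b.linearIndependent.map' L.subtype L.ker_subtype
      simpa using (Pi.basisFun ℤ (Fin e)).card_le_card_of_linearIndependent hind
    have h2 : e ≤ r := by
      have hind0 : LinearIndependent ℤ
          (fun j : Fin e => ((n : ℤ) • Pi.single j 1 : Fin e → ℤ)) := by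
        rw [Fintype.linearIndependent_iff]
        intro g hg j
        have hgj := congrFun hg j
        simp only [Finset.sum_apply, Pi.smul_apply, smul_eq_mul, Pi.single_apply,
          mul_ite, mul_one, mul_zero, Finset.sum_ite_eq', Finset.sum_ite_eq, Finset.mem_univ, if_true,
          Pi.zero_apply] at hgj
        have hn' : (n : ℤ) ≠ 0 := Int.natCast_ne_zero.mpr hn
        exact by
          rcases mul_eq_zero.mp hgj with h | h
          · exact h
          · exact absurd h hn'
      have hind : LinearIndependent ℤ (fun j : Fin e =>
          (⟨(n : ℤ) • Pi.single j 1, hL j⟩ : ↥L)) := by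
        apply LinearIndependent.of_comp L.subtype
        convert hind0
        rfl
      simpa using b.card_le_card_of_linearIndependent hind
    omega
  let b' : Module.Basis (Fin e) ℤ ↥L := b.reindex (finCongr hre)
  set W : Matrix (Fin e) (Fin e) ℤ := Matrix.of fun i j => ((b' j : Fin e → ℤ)) i with hW
  have hWmap : W.mulVecLin = L.subtype ∘ₗ (b'.equivFun.symm : (Fin e → ℤ) →ₗ[ℤ] ↥L) := by
    apply LinearMap.ext; intro x
    have h1 : b'.equivFun.symm x = ∑ j, x j • b' j := b'.equivFun_symm_apply x
    have h2 : ((b'.equivFun.symm x : ↥L) : Fin e → ℤ) = ∑ j, x j • ((b' j : Fin e → ℤ)) := by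
      rw [h1]
      push_cast
      simp
    ext i
    simp only [Matrix.mulVecLin_apply, LinearMap.comp_apply, Submodule.coe_subtype, LinearEquiv.coe_coe, h2,
      Matrix.mulVec, dotProduct, Finset.sum_apply, Pi.smul_apply, smul_eq_mul, hW,
      Matrix.of_apply, mul_comm]
  refine ⟨W, ?_, ?_⟩
  · rw [hWmap, LinearMap.range_comp, LinearEquiv.range, Submodule.map_top,
      Submodule.range_subtype]
  · rw [hWmap]
    exact L.injective_subtype.comp b'.equivFun.symm.injective

theorem range_augMatrixK (e n k : ℕ) (m : ℕ → Fin e → ℕ) :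
    LinearMap.range (augMatrixK e n k m).mulVecLin = latticeUpTo e n k m := by
  rw [Matrix.range_mulVecLin]
  unfold latticeUpTo
  congr 1
  ext v
  constructor
  · rintro ⟨j, rfl⟩
    cases j with
    | inl j' =>
      left
      exact ⟨j', by funext i; simp [augMatrixK, Matrix.transpose_apply, Pi.single_apply]⟩
    | inr j' =>
      right
      exact ⟨j', by funext i; simp [augMatrixK, Matrix.transpose_apply]⟩
  · rintro (⟨j', rfl⟩ | ⟨j', rfl⟩)
    · exact ⟨Sum.inl j', by funext i; simp [augMatrixK, Matrix.transpose_apply, Pi.single_apply]⟩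
    · exact ⟨Sum.inr j', by funext i; simp [augMatrixK, Matrix.transpose_apply]⟩


/-- With `D_1 = n^e` and `D_{i+1}` the gcd of the `e × e` minors of
`(n·I_e | m_1ᵀ | … | m_iᵀ)`, the hypothesis `m_i ∉ (nℤ)^e + Σ_{j<i} m_j ℤ`
for all `i` implies `D_{i+1} < D_i` for all `1 ≤ i ≤ h`.  (Here indices are shifted
by one: `Dseq e n m i` is the paper's `D_{i+1}`, and `m 0, …, m (h-1)` are the
paper's `m_1, …, m_h`.) -/
theorem Dseq_strict_anti (e n h : ℕ) (hn : 0 < n) (m : ℕ → Fin e → ℕ)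
    (hm : ∀ i < h, (fun t : Fin e => (m i t : ℤ)) ∉ latticeUpTo e n i m) :
    ∀ i < h, Dseq e n m (i + 1) < Dseq e n m i := by
  intro i hi
  have hmemL : ∀ k : ℕ, ∀ j : Fin e, ((n : ℤ) • Pi.single j 1) ∈ latticeUpTo e n k m :=
    fun k j => Submodule.subset_span (Or.inl ⟨j, rfl⟩)
  obtain ⟨W, hWr, hWi⟩ := exists_basis_matrix hn.ne' (latticeUpTo e n i m) (hmemL i)
  obtain ⟨W', hW'r, hW'i⟩ :=
    exists_basis_matrix hn.ne' (latticeUpTo e n (i + 1) m) (hmemL (i + 1))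
  have hD : Dseq e n m i = normalize W.det :=
    gcdMinors_eq_normalize_det _ _ ((range_augMatrixK e n i m).trans hWr.symm) hWi
  have hD' : Dseq e n m (i + 1) = normalize W'.det :=
    gcdMinors_eq_normalize_det _ _ ((range_augMatrixK e n (i + 1) m).trans hW'r.symm) hW'i
  have hle : latticeUpTo e n i m ≤ latticeUpTo e n (i + 1) m := by
    apply Submodule.span_mono
    apply Set.union_subset_union subset_rfl
    rintro v ⟨j, rfl⟩
    exact ⟨j.castSucc, rfl⟩
  obtain ⟨C, hC⟩ := exists_factor_matrix W W' (by rw [hWr, hW'r]; exact hle)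
  have hdet : W.det = W'.det * C.det := by rw [hC, Matrix.det_mul]
  have hW0 : W.det ≠ 0 := by
    intro h0
    obtain ⟨v, hv0, hv⟩ := Matrix.exists_mulVec_eq_zero_iff.mpr h0
    exact hv0 (hWi (show W.mulVecLin v = W.mulVecLin 0 by
      simp [Matrix.mulVecLin_apply, hv]))
  have hW'0 : W'.det ≠ 0 := by
    intro h0
    obtain ⟨v, hv0, hv⟩ := Matrix.exists_mulVec_eq_zero_iff.mpr h0
    exact hv0 (hW'i (show W'.mulVecLin v = W'.mulVecLin 0 by
      simp [Matrix.mulVecLin_apply, hv]))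
  have hC0 : C.det ≠ 0 := fun h0 => hW0 (by rw [hdet, h0, mul_zero])
  have hCnu : ¬IsUnit C.det := by
    intro hU
    have hCsurj : Function.Surjective C.mulVecLin := by
      have h1 : C * C⁻¹ = 1 := Matrix.mul_nonsing_inv C hU
      intro y
      exact ⟨(C⁻¹).mulVec y, by
        simp [Matrix.mulVecLin_apply, Matrix.mulVec_mulVec, h1]⟩
    have hreq : LinearMap.range W.mulVecLin = LinearMap.range W'.mulVecLin := by
      rw [hC, Matrix.mulVecLin_mul]
      exact LinearMap.range_comp_of_range_eq_top _ (LinearMap.range_eq_top.2 hCsurj)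
    have hmemi : (fun t : Fin e => (m i t : ℤ)) ∈ latticeUpTo e n (i + 1) m :=
      Submodule.subset_span (Or.inr ⟨Fin.last i, rfl⟩)
    have heq : latticeUpTo e n i m = latticeUpTo e n (i + 1) m := by
      rw [← hWr, hreq, hW'r]
    exact hm i hi (heq ▸ hmemi)
  have habs : |W.det| = |W'.det| * |C.det| := by rw [hdet, abs_mul]
  have h1C : 1 < |C.det| := by
    rcases lt_or_eq_of_le (Int.one_le_abs hC0) with h | h
    · exact h
    · exfalso
      apply hCnu
      rcases (abs_eq (by norm_num : (0:ℤ) ≤ 1)).mp h.symm with h' | h' <;>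
        rw [h'] <;> simp
  rw [hD, hD', ← Int.abs_eq_normalize, ← Int.abs_eq_normalize, habs]
  have h0W' : 0 < |W'.det| := abs_pos.mpr hW'0
  exact (lt_mul_iff_one_lt_right h0W').mpr h1C
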